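/- arXiv:2508.08021 — 4 statements merged into one kernel-verified Lean document; each statement's English description precedes it below -/
import Mathlib

section
/- On a weak almost contact metric structure (A, Q, ξ, η, g) on a real inner product space V (i.e., A skew-adjoint, Q self-adjoint positive, A² = -Q + η ⊗ ξ, g(Ax,Ay) = g(Qx,y) - η(x)η(y), Aξ = 0, Qξ = ξ, η(x) = g(x,ξ), g(ξ,ξ) = 1), the endomorphisms A and Q commute: A Q = Q A. -/
open RealInnerProductSpace

/-- on a weak almost contact metric structure `(A,Q,ξ,η,g)`
the endomorphisms `A` and `Q` commute. -/
theorem stmt_6 {V : Type*} [NormedAddCommGroup V] [InnerProductSpace ℝ V]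
    (A Q : V →ₗ[ℝ] V) (ξ : V) (η : V → ℝ)
    (hξ : ⟪ξ, ξ⟫ = 1)
    (hη : ∀ x, η x = ⟪x, ξ⟫)
    (hA : ∀ x y, ⟪A x, y⟫ = -⟪x, A y⟫)
    (hQ : ∀ x y, ⟪Q x, y⟫ = ⟪x, Q y⟫)
    (hQpos : ∀ x, x ≠ 0 → 0 < ⟪Q x, x⟫)
    (hA2 : ∀ x, A (A x) = - Q x + η x • ξ)
    (hAA : ∀ x y, ⟪A x, A y⟫ = ⟪Q x, y⟫ - η x * η y)
    (hAξ : A ξ = 0)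
    (hQξ : Q ξ = ξ) :
    ∀ x, A (Q x) = Q (A x) := by
  intro x
  have hηA : η (A x) = 0 := by
    rw [hη, hA, hAξ, inner_zero_right, neg_zero]
  have h1 : A (A (A x)) = - Q (A x) + η (A x) • ξ := hA2 (A x)
  have h2 : A (A (A x)) = - A (Q x) := by
    rw [hA2 x, map_add, map_neg, map_smul, hAξ, smul_zero, add_zero]
  rw [h2, hηA, zero_smul, add_zero] at h1
  exact neg_injective h1
end

section
/- Let ∇ be a linear connection with totally skew-symmetric torsion (0,3)-tensor T on a generalized Riemannian manifold (M, G = g + F), satisfying the Einstein metricity condition so that (∇_X g)(Y,Z) = -(1/6)[dF(X,Y,AZ) - dF(X,AY,Z)] and T = -(1/3) dF. Then ∇ satisfies the A-torsion condition T(AX,Y,Z) = T(X,AY,Z) if and only if ∇ g = 0. -/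
private lemma smul_cancel_aux {R : Type*} [CommRing R] [Algebra ℝ R]
    (c : ℝ) (hc : c ≠ 0) {a b : R} (h : c • a = c • b) : a = b := by
  have := congrArg (fun x => c⁻¹ • x) h
  simpa [smul_smul, inv_mul_cancel₀ hc] using this

/-- vector fields are modelled as a module `V` over the ring `R`
of smooth functions. For an Einstein connection `cov` with totally
skew-symmetric torsion `T = -(1/3) dF` and covariant derivative of `g` given
by the EMC formula, the `A`-torsion condition `T(AX,Y,Z) = T(X,AY,Z)` holds
iff `∇ g = 0`. -/
theorem stmt_10 {R V : Type*} [CommRing R] [Algebra ℝ R]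
    [AddCommGroup V] [Module R V]
    (g : V →ₗ[R] V →ₗ[R] R) (D : V → R → R)
    (A : V → V) (F : V → V → R) (dF T : V → V → V → R)
    (hAF : ∀ X Y, g (A X) Y = F X Y)
    (hAskew : ∀ X Y, g (A X) Y = - g X (A Y))
    (hdF1 : ∀ X Y Z, dF X Y Z = - dF Y X Z)
    (hdF2 : ∀ X Y Z, dF X Y Z = - dF X Z Y)
    (hT : ∀ X Y Z, T X Y Z = -((1/3 : ℝ) • dF X Y Z))
    (cov : V → V → V)
    (hEMC : ∀ X Y Z, D X (g Y Z) - g (cov X Y) Z - g Y (cov X Z)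
      = -((1/6 : ℝ) • (dF X Y (A Z) - dF X (A Y) Z))) :
    (∀ X Y Z, T (A X) Y Z = T X (A Y) Z) ↔
    (∀ X Y Z, D X (g Y Z) - g (cov X Y) Z - g Y (cov X Z) = 0) := by
  have hcyc : ∀ X Y Z, dF X Y Z = dF Z X Y := by
    intro X Y Z
    rw [hdF2 X Y Z, hdF1 X Z Y, neg_neg]
  constructor
  · intro h X Y Z
    have key : ∀ X Y Z, dF (A X) Y Z = dF X (A Y) Z := by
      intro X Y Z
      have h1 := h X Y Z
      rw [hT, hT] at h1
      exact smul_cancel_aux (1/3 : ℝ) (by norm_num) (neg_injective h1)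
    have q : dF X Y (A Z) = dF X (A Y) Z := by
      calc dF X Y (A Z) = dF (A Z) X Y := hcyc X Y (A Z)
        _ = dF Z (A X) Y := key Z X Y
        _ = - dF (A X) Z Y := hdF1 _ _ _
        _ = dF (A X) Y Z := by rw [hdF2 (A X) Z Y, neg_neg]
        _ = dF X (A Y) Z := key X Y Z
    rw [hEMC, q, sub_self, smul_zero, neg_zero]
  · intro h X Y Z
    have key : ∀ X Y Z, dF X Y (A Z) = dF X (A Y) Z := by
      intro X Y Z
      have h1 := (hEMC X Y Z).symm.trans (h X Y Z)
      have h2 : (1/6 : ℝ) • (dF X Y (A Z) - dF X (A Y) Z) = (1/6 : ℝ) • (0 : R) := by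
        rw [smul_zero]; exact neg_eq_zero.mp h1
      have := smul_cancel_aux (1/6 : ℝ) (by norm_num) h2
      exact sub_eq_zero.mp this
    rw [hT, hT]
    have keq : dF (A X) Y Z = dF X (A Y) Z := by
        calc dF (A X) Y Z = - dF Y (A X) Z := hdF1 _ _ _
        _ = - dF Y X (A Z) := by rw [key Y X Z]
        _ = dF X Y (A Z) := by rw [hdF1 Y X (A Z), neg_neg]
        _ = dF X (A Y) Z := key X Y Z
    rw [keq]
end

section
/- Let V be a real inner product space, ξ a unit vector, η(x) = ⟨x,ξ⟩, A skew-adjoint with Aξ = 0, and Q self-adjoint positive-definite with Qξ = ξ and A² = -Q + η⊗ξ. If a bilinear form b on V satisfies b(x + Qx, Ay) = 0 for all x, y and b(ξ, y) = 0 for all y, then b(x, Ay) = 0 for all x, y; if moreover A has kernel spanned by ξ and b is skew-symmetric with b(·, ξ) = 0, then b = 0. -/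
open RealInnerProductSpace

/-- on a weak almost contact metric structure, a bilinear form
`b` with `b(x+Qx, Ay) = 0` and `b(ξ,·) = 0` satisfies `b(·, A·) = 0`; if
moreover `ker A = span{ξ}` and `b` is skew-symmetric with `b(·,ξ) = 0`, then
`b = 0`. -/
theorem stmt_18 {V : Type*} [NormedAddCommGroup V] [InnerProductSpace ℝ V]
    [FiniteDimensional ℝ V]
    (A Q : V →ₗ[ℝ] V) (ξ : V) (η : V → ℝ)
    (hξ : ⟪ξ, ξ⟫ = 1)
    (hη : ∀ x, η x = ⟪x, ξ⟫)
    (hA : ∀ x y, ⟪A x, y⟫ = -⟪x, A y⟫)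
    (hAξ : A ξ = 0)
    (hQ : ∀ x y, ⟪Q x, y⟫ = ⟪x, Q y⟫)
    (hQpos : ∀ x, x ≠ 0 → 0 < ⟪Q x, x⟫)
    (hQξ : Q ξ = ξ)
    (hA2 : ∀ x, A (A x) = - Q x + η x • ξ)
    (b : V →ₗ[ℝ] V →ₗ[ℝ] ℝ)
    (hb1 : ∀ x y, b (x + Q x) (A y) = 0)
    (hb2 : ∀ y, b ξ y = 0) :
    (∀ x y, b x (A y) = 0) ∧
    (LinearMap.ker A = Submodule.span ℝ {ξ} →
      (∀ x y, b x y = - b y x) → (∀ x, b x ξ = 0) →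
      ∀ x y, b x y = 0) := by
  -- f = I + Q is injective, hence surjective
  set f : V →ₗ[ℝ] V := LinearMap.id + Q with hf
  have hfinj : Function.Injective f := by
    rw [← LinearMap.ker_eq_bot, LinearMap.ker_eq_bot']
    intro m hm
    by_contra hm0
    have h1 : ⟪f m, m⟫ = 0 := by rw [hm]; simp
    have h2 : (0:ℝ) < ⟪f m, m⟫ := by
      simp only [hf, LinearMap.add_apply, LinearMap.id_apply, inner_add_left]
      have hq := hQpos m hm0
      have hm : (0:ℝ) < ⟪m, m⟫ := by
        rw [real_inner_self_eq_norm_sq]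
        exact pow_pos (norm_pos_iff.2 hm0) 2
      linarith
    linarith
  have hfsurj : Function.Surjective f :=
    LinearMap.surjective_of_injective hfinj
  have part1 : ∀ x y, b x (A y) = 0 := by
    intro x y
    obtain ⟨z, hz⟩ := hfsurj x
    have := hb1 z y
    simpa [hf, ← hz] using this
  refine ⟨part1, ?_⟩
  intro hker hskew hbξ x y
  have hξ0 : ξ ≠ 0 := by
    intro h; rw [h] at hξ; simp at hξ
  -- range A = (span ξ)ᗮ
  have hle : LinearMap.range A ≤ (Submodule.span ℝ {ξ})ᗮ := by
    rintro _ ⟨z, rfl⟩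
    rw [Submodule.mem_orthogonal]
    intro u hu
    rw [Submodule.mem_span_singleton] at hu
    obtain ⟨c, rfl⟩ := hu
    rw [real_inner_smul_left, real_inner_comm, hA, hAξ]
    simp
  have hdim : Module.finrank ℝ (LinearMap.range A) =
      Module.finrank ℝ ((Submodule.span ℝ {ξ})ᗮ) := by
    have h1 : Module.finrank ℝ (Submodule.span ℝ {ξ}) = 1 :=
      finrank_span_singleton hξ0
    have h2 := Submodule.finrank_add_finrank_orthogonal
      (K := Submodule.span ℝ {ξ})
    have h3 := LinearMap.finrank_range_add_finrank_ker A
    rw [hker, h1] at h3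
    omega
  have hrange : LinearMap.range A = (Submodule.span ℝ {ξ})ᗮ :=
    Submodule.eq_of_le_of_finrank_eq hle hdim
  -- decompose y
  have hyperp : y - ⟪y, ξ⟫ • ξ ∈ (Submodule.span ℝ {ξ})ᗮ := by
    rw [Submodule.mem_orthogonal]
    intro u hu
    rw [Submodule.mem_span_singleton] at hu
    obtain ⟨c, rfl⟩ := hu
    rw [real_inner_smul_left, inner_sub_right, real_inner_smul_right,
      real_inner_comm ξ y, hξ]
    ring
  rw [← hrange] at hyperp
  obtain ⟨z, hz⟩ := hyperp
  have : y = ⟪y, ξ⟫ • ξ + A z := by rw [hz]; abel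
  rw [this]
  simp [part1 x z, hbξ x]
end

section
/- Let (M,g) be a Riemannian manifold, A a skew-adjoint (1,1)-tensor field with A² = -Q for Q self-adjoint positive-definite, and suppose ∇^g A satisfies (∇^g_X A)Y = -T(X,Y) for a totally skew-symmetric (1,2)-torsion-type tensor T satisfying T(AX,Y) = T(X,AY). Then ∇^g Q = 0, i.e., g((∇^g_X Q)Y, Z) = 0 for all vector fields X,Y,Z. -/
/-- In an `ℝ`-algebra, `x + x = 0` implies `x = 0`. -/
lemma stmt_19_half {R : Type*} [CommRing R] [Algebra ℝ R] {x : R}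
    (h : x + x = 0) : x = 0 := by
  have h2 : (2 : ℝ) • x = 0 := by rw [two_smul]; exact h
  have h3 := congrArg (fun y => (2 : ℝ)⁻¹ • y) h2
  simpa [smul_smul] using h3

/-- vector fields are modelled as a module `V` over the ring `R`
of smooth functions, `covg` the Levi-Civita connection. If `A` is skew-adjoint
with `Q = -A²`, and `(∇^g_X A)Y = -T(X,Y)` for a totally skew-symmetric
torsion-type tensor `T` satisfying the `A`-torsion condition, then
`∇^g Q = 0`. -/
theorem stmt_19 {R V : Type*} [CommRing R] [Algebra ℝ R]
    [AddCommGroup V] [Module R V]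
    (g : V →ₗ[R] V →ₗ[R] R) (D : V → R → R) (lie : V → V → V)
    (covg : V → V → V)
    (hmc : ∀ X Y Z, D X (g Y Z) = g (covg X Y) Z + g Y (covg X Z))
    (htf : ∀ X Y, covg X Y - covg Y X = lie X Y)
    (A Q : V → V) (T : V → V → V)
    (hAskew : ∀ X Y, g (A X) Y = - g X (A Y))
    (hQdef : ∀ X, Q X = -(A (A X)))
    (hQsa : ∀ X Y, g (Q X) Y = g X (Q Y))
    (hTskew1 : ∀ X Y Z, g (T X Y) Z = - g (T Y X) Z)
    (hTskew2 : ∀ X Y Z, g (T X Y) Z = - g (T X Z) Y)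
    (hAt : ∀ X Y Z, g (T (A X) Y) Z = g (T X (A Y)) Z)
    (hnablaA : ∀ X Y, covg X (A Y) - A (covg X Y) = - T X Y) :
    ∀ X Y Z, g (covg X (Q Y) - Q (covg X Y)) Z = 0 := by
  intro X Y Z
  -- Key lemma: the covariant derivative is "odd" as seen through `g`.
  have hneg : ∀ W, g (covg X (-W)) Z = - g (covg X W) Z := by
    intro W
    have eA : D X (g (-W) Z) = D X (g W (-Z)) := by
      congr 1; simp
    have EqA : g (covg X (-W)) Z + g (-W) (covg X Z)
        = g (covg X W) (-Z) + g W (covg X (-Z)) := by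
      rw [← hmc, ← hmc]; exact eA
    have eB : D X (g (-W) (-Z)) = D X (g W Z) := by
      congr 1; simp
    have EqB : g (covg X (-W)) (-Z) + g (-W) (covg X (-Z))
        = g (covg X W) Z + g W (covg X Z) := by
      rw [← hmc, ← hmc]; exact eB
    simp only [map_neg, LinearMap.neg_apply] at EqA EqB
    have hsum : (g (covg X (-W)) Z + g (covg X W) Z)
        + (g (covg X (-W)) Z + g (covg X W) Z) = 0 := by
      linear_combination EqA - EqB
    exact eq_neg_of_add_eq_zero_left (stmt_19_half hsum)
  -- The `∇A` hypothesis, rearranged.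
  have h2' : covg X (A (A Y)) = -(T X (A Y)) + A (covg X (A Y)) :=
    sub_eq_iff_eq_add.mp (hnablaA X (A Y))
  have h3' : covg X (A Y) = -(T X Y) + A (covg X Y) :=
    sub_eq_iff_eq_add.mp (hnablaA X Y)
  have i1 : g (covg X (A (A Y))) Z
      = -(g (T X (A Y)) Z) + g (A (covg X (A Y))) Z := by
    rw [h2']; simp
  have i2 : g (A (covg X (A Y))) Z = -(g (covg X (A Y)) (A Z)) := hAskew _ _
  have i3 : g (covg X (A Y)) (A Z)
      = -(g (T X Y) (A Z)) + g (A (covg X Y)) (A Z) := by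
    rw [h3']; simp
  have i4 : g (A (covg X Y)) (A Z) = -(g (covg X Y) (A (A Z))) := hAskew _ _
  have i5 : g (covg X Y) (A (A Z)) = -(g (covg X Y) (Q Z)) := by
    have hz : A (A Z) = -(Q Z) := by rw [hQdef Z, neg_neg]
    rw [hz, map_neg]
  have i6 : g (covg X Y) (Q Z) = g (Q (covg X Y)) Z := (hQsa _ _).symm
  have i7 : g (T X Y) (A Z) = g (T X (A Y)) Z := by
    calc g (T X Y) (A Z) = -(g (T X (A Z)) Y) := hTskew2 X Y (A Z)
      _ = -(g (T (A X) Z) Y) := by rw [hAt X Z Y]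
      _ = g (T (A X) Y) Z := (hTskew2 (A X) Y Z).symm
      _ = g (T X (A Y)) Z := hAt X Y Z
  have key : g (covg X (A (A Y))) Z = -(g (Q (covg X Y)) Z) := by
    linear_combination i1 + i2 - i3 - i4 + i5 - i6 + i7
  rw [map_sub, LinearMap.sub_apply, hQdef Y, hneg, key]
  ring
end
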